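/- For all complex z, ξ, every nonnegative integer n, and ν > 0, we have ν^n (ξ̄ − z)^n e^{ν ξ z} = Σ_{m=0}^∞ (z^m/m!) H^ν_{m,n}(ξ, ξ̄), with absolute convergence of the series. -/

import Mathlib

open Complex

/-- The weighted complex Hermite polynomial `H^ν_{m,n}(ξ, ξ̄)`. -/
noncomputable def hermiteC (ν : ℝ) (m n : ℕ) (ξ : ℂ) : ℂ :=
  (m.factorial : ℂ) * (n.factorial : ℂ) * (ν : ℂ) ^ (m + n) *
    ∑ k ∈ Finset.range (min m n + 1),
      (-1 : ℂ) ^ k * ξ ^ (m - k) * (starRingEnd ℂ ξ) ^ (n - k) /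
        ((ν : ℂ) ^ k * (k.factorial : ℂ) * ((m - k).factorial : ℂ) * ((n - k).factorial : ℂ))

/-- Auxiliary coefficient for the generating function proof. -/
noncomputable def hermAux (ν : ℝ) (z ξ : ℂ) (n m k : ℕ) : ℂ :=
  if k ≤ m then
    (n.factorial : ℂ) * (ν : ℂ) ^ (m + n - k) * (-1) ^ k * z ^ m * ξ ^ (m - k) *
      (starRingEnd ℂ ξ) ^ (n - k) /
      ((k.factorial : ℂ) * ((m - k).factorial : ℂ) * ((n - k).factorial : ℂ))
  else 0

lemma hermAux_eq (ν : ℝ) (hν : 0 < ν) (z ξ : ℂ) (n m : ℕ) :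
    z ^ m / (m.factorial : ℂ) * hermiteC ν m n ξ =
      ∑ k ∈ Finset.range (n + 1), hermAux ν z ξ n m k := by
  have hνC : (ν : ℂ) ≠ 0 := by exact_mod_cast hν.ne'
  have hfilt : (Finset.range (n + 1)).filter (fun k => k ≤ m) =
      Finset.range (min m n + 1) := by
    ext k
    simp only [Finset.mem_filter, Finset.mem_range]
    omega
  simp only [hermAux]
  rw [← Finset.sum_filter, hfilt, hermiteC]
  simp only [Finset.mul_sum]
  refine Finset.sum_congr rfl fun k hk => ?_
  have hk' : k ≤ min m n := by simpa [Nat.lt_succ_iff] using hk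
  have hkm : k ≤ m := le_trans hk' (min_le_left _ _)
  have hkmn : k ≤ m + n := by omega
  have h1 : (m.factorial : ℂ) ≠ 0 := Nat.cast_ne_zero.mpr m.factorial_ne_zero
  have h2 : (k.factorial : ℂ) ≠ 0 := Nat.cast_ne_zero.mpr k.factorial_ne_zero
  have h3 : ((m - k).factorial : ℂ) ≠ 0 := Nat.cast_ne_zero.mpr (m - k).factorial_ne_zero
  have h4 : ((n - k).factorial : ℂ) ≠ 0 := Nat.cast_ne_zero.mpr (n - k).factorial_ne_zero
  rw [pow_sub₀ _ hνC hkmn]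
  field_simp

lemma hermAux_summable_tsum (ν : ℝ) (hν : 0 < ν) (z ξ : ℂ) (n k : ℕ) (hkn : k ≤ n) :
    Summable (fun m => hermAux ν z ξ n m k) ∧
      ∑' m, hermAux ν z ξ n m k =
        (n.factorial : ℂ) * (ν : ℂ) ^ n * (-1) ^ k * z ^ k *
          (starRingEnd ℂ ξ) ^ (n - k) / ((k.factorial : ℂ) * ((n - k).factorial : ℂ)) *
          Complex.exp ((ν : ℂ) * ξ * z) := by
  set w : ℂ := (ν : ℂ) * ξ * z with hw
  set D : ℂ := (n.factorial : ℂ) * (ν : ℂ) ^ n * (-1) ^ k * z ^ k *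
      (starRingEnd ℂ ξ) ^ (n - k) / ((k.factorial : ℂ) * ((n - k).factorial : ℂ)) with hD
  have key : ∀ j : ℕ, hermAux ν z ξ n (k + j) k = D * (w ^ j / (j.factorial : ℂ)) := by
    intro j
    have hle : k ≤ k + j := Nat.le_add_right _ _
    have e1 : k + j + n - k = n + j := by omega
    have e2 : k + j - k = j := by omega
    have h2 : (k.factorial : ℂ) ≠ 0 := Nat.cast_ne_zero.mpr k.factorial_ne_zero
    have h3 : (j.factorial : ℂ) ≠ 0 := Nat.cast_ne_zero.mpr j.factorial_ne_zero
    have h4 : ((n - k).factorial : ℂ) ≠ 0 := Nat.cast_ne_zero.mpr (n - k).factorial_ne_zero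
    rw [hermAux, if_pos hle, e1, e2, hD, hw]
    rw [pow_add, pow_add, mul_pow, mul_pow]
    field_simp
  have hinj : Function.Injective (fun j : ℕ => k + j) := fun a b h => by
    simpa using h
  have hzero : ∀ m ∉ Set.range (fun j : ℕ => k + j), hermAux ν z ξ n m k = 0 := by
    intro m hm
    rw [hermAux, if_neg]
    intro hkm
    exact hm ⟨m - k, show k + (m - k) = m by omega⟩
  have hsupp : Function.support (fun m => hermAux ν z ξ n m k) ⊆
      Set.range (fun j : ℕ => k + j) := by
    intro m hm
    by_contra h
    exact hm (hzero m h)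
  have hs' : Summable ((fun m => hermAux ν z ξ n m k) ∘ (fun j : ℕ => k + j)) :=
    ((NormedSpace.expSeries_div_summable w).mul_left D).congr fun j => (key j).symm
  have hs : Summable (fun m => hermAux ν z ξ n m k) := (hinj.summable_iff hzero).mp hs'
  refine ⟨hs, ?_⟩
  have hexp : Complex.exp w = ∑' j : ℕ, w ^ j / (j.factorial : ℂ) := by
    rw [Complex.exp_eq_exp_ℂ, NormedSpace.exp_eq_tsum_div]
  rw [← hinj.tsum_eq hsupp]
  simp only [key]
  rw [tsum_mul_left, hexp]

theorem hermiteC_generating_function' (ν : ℝ) (hν : 0 < ν) (z ξ : ℂ) (n : ℕ) :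
    Summable (fun m : ℕ => z ^ m / (m.factorial : ℂ) * hermiteC ν m n ξ) ∧
      (ν : ℂ) ^ n * (starRingEnd ℂ ξ - z) ^ n * Complex.exp ((ν : ℂ) * ξ * z) =
        ∑' m : ℕ, z ^ m / (m.factorial : ℂ) * hermiteC ν m n ξ := by
  have hsk : ∀ k ∈ Finset.range (n + 1), Summable (fun m => hermAux ν z ξ n m k) :=
    fun k hk => (hermAux_summable_tsum ν hν z ξ n k (by simpa [Nat.lt_succ_iff] using hk)).1
  have hS : Summable (fun m => ∑ k ∈ Finset.range (n + 1), hermAux ν z ξ n m k) :=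
    summable_sum hsk
  constructor
  · exact hS.congr fun m => (hermAux_eq ν hν z ξ n m).symm
  · rw [tsum_congr (fun m => hermAux_eq ν hν z ξ n m), Summable.tsum_finsetSum hsk]
    rw [Finset.sum_congr rfl
      (fun k hk => (hermAux_summable_tsum ν hν z ξ n k (by simpa [Nat.lt_succ_iff] using hk)).2)]
    rw [sub_eq_neg_add, add_pow]
    rw [Finset.mul_sum, Finset.sum_mul]
    refine Finset.sum_congr rfl fun k hk => ?_
    have hkn : k ≤ n := by simpa [Nat.lt_succ_iff] using hk
    have h2 : (k.factorial : ℂ) ≠ 0 := Nat.cast_ne_zero.mpr k.factorial_ne_zero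
    have h4 : ((n - k).factorial : ℂ) ≠ 0 := Nat.cast_ne_zero.mpr (n - k).factorial_ne_zero
    rw [Nat.cast_choose ℂ hkn, neg_pow]
    field_simp
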